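/- Let A = (Q, ι, δ, F) be an NBA over a finite alphabet Σ, let D be a DAC of A, let w : ℕ → Σ be an infinite word, and consider the level-labelling functions (g_ℓ) of the DAC construction for D. For every ℓ ∈ ℕ and every q ∈ S_ℓ ∩ D such that q' = δ_D(q, w(ℓ)) exists and q' ∈ S_{ℓ+1} ∩ D, one has g_{ℓ+1}(q') ≤ g_ℓ(q). Consequently, for every run ρ of A over w with ρ(j) ∈ D for all j ≥ ℓ₀, the sequence (g_j(ρ(j)))_{j ≥ ℓ₀} is non-increasing and hence eventually constant. -/
import Mathlib


open scoped Classical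

/-- A nondeterministic Büchi automaton with state type `Q` and alphabet `A`:
an initial state, a transition relation (given as `trans : Q → A → Set Q`),
and a set `acc` of accepting transitions, which must be transitions of the automaton. -/
structure NBA (Q A : Type) where
  init : Q
  trans : Q → A → Set Q
  acc : Set (Q × A × Q)
  acc_sub : ∀ t ∈ acc, t.2.2 ∈ trans t.1 t.2.1

namespace NBA

variable {Q A : Type}

/-- `ρ` is a run of the NBA `M` over the infinite word `w`. -/
def IsRun (M : NBA Q A) (w : ℕ → A) (ρ : ℕ → Q) : Prop :=
  ρ 0 = M.init ∧ ∀ ℓ : ℕ, ρ (ℓ + 1) ∈ M.trans (ρ ℓ) (w ℓ)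

/-- `ρ` is an accepting run of `M` over `w`: a run taking accepting transitions
infinitely often. -/
def IsAcceptingRun (M : NBA Q A) (w : ℕ → A) (ρ : ℕ → Q) : Prop :=
  M.IsRun w ρ ∧ ∀ n : ℕ, ∃ ℓ ≥ n, (ρ ℓ, w ℓ, ρ (ℓ + 1)) ∈ M.acc

/-- `w` is in the language of `M`. -/
def InLanguage (M : NBA Q A) (w : ℕ → A) : Prop :=
  ∃ ρ : ℕ → Q, M.IsAcceptingRun w ρ

/-- `q'` is reachable from `q` (via a finite, possibly empty, word). -/
def Reach (M : NBA Q A) : Q → Q → Prop :=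
  Relation.ReflTransGen fun q q' => ∃ a : A, q' ∈ M.trans q a

/-- `C` is a strongly connected component: any two of its states are mutually
reachable, and it is maximal with this property. -/
def IsSCC (M : NBA Q A) (C : Set Q) : Prop :=
  (∀ q ∈ C, ∀ q' ∈ C, M.Reach q q' ∧ M.Reach q' q) ∧
  ∀ C' : Set Q, C ⊆ C' → (∀ q ∈ C', ∀ q' ∈ C', M.Reach q q' ∧ M.Reach q' q) → C' = C

/-- An SCC is accepting if it contains an accepting transition. -/
def AccSCC (M : NBA Q A) (C : Set Q) : Prop :=
  ∃ q ∈ C, ∃ a : A, ∃ q' ∈ C, (q, a, q') ∈ M.acc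

/-- A cycle through `C`: a nonempty finite sequence of transitions within
`C × A × C` starting and ending at the same state. -/
def IsCycle (M : NBA Q A) (C : Set Q) (n : ℕ) (p : ℕ → Q) (u : ℕ → A) : Prop :=
  1 ≤ n ∧ p n = p 0 ∧ ∀ i < n, p i ∈ C ∧ p (i + 1) ∈ C ∧ p (i + 1) ∈ M.trans (p i) (u i)

/-- The cycle visits an accepting transition. -/
def CycleHasAcc (M : NBA Q A) (n : ℕ) (p : ℕ → Q) (u : ℕ → A) : Prop :=
  ∃ i < n, (p i, u i, p (i + 1)) ∈ M.acc

/-- `C` is inherently weak: either every cycle through `C` contains an accepting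
transition, or no cycle through `C` does. -/
def InherentlyWeak (M : NBA Q A) (C : Set Q) : Prop :=
  (∀ n p u, M.IsCycle C n p u → M.CycleHasAcc n p u) ∨
  (∀ n p u, M.IsCycle C n p u → ¬ M.CycleHasAcc n p u)

/-- `δ(S, a)`, the set of successors of states of `S` under letter `a`. -/
def stepSet (M : NBA Q A) (S : Set Q) (a : A) : Set Q :=
  {q' | ∃ q ∈ S, q' ∈ M.trans q a}

/-- `S_ℓ`: the set of states reached at level `ℓ` of the run DAG of `M` over `w`. -/
def reachSet (M : NBA Q A) (w : ℕ → A) : ℕ → Set Q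
  | 0 => {M.init}
  | ℓ + 1 => M.stepSet (M.reachSet w ℓ) (w ℓ)

/-- `W`: the union of the inherently weak SCCs. -/
def weakStates (M : NBA Q A) : Set Q :=
  {q | ∃ C : Set Q, M.IsSCC C ∧ M.InherentlyWeak C ∧ q ∈ C}

/-- `WA`: the union of the accepting inherently weak SCCs. -/
def weakAccStates (M : NBA Q A) : Set Q :=
  {q | ∃ C : Set Q, M.IsSCC C ∧ M.InherentlyWeak C ∧ M.AccSCC C ∧ q ∈ C}

/-- The sequence `(P_ℓ, O_ℓ)` of the inherently-weak-SCC construction of `M` over `w`. -/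
noncomputable def weakSeq (M : NBA Q A) (w : ℕ → A) : ℕ → Set Q × Set Q
  | 0 => ({M.init} ∩ M.weakStates, ∅)
  | ℓ + 1 =>
      (M.reachSet w (ℓ + 1) ∩ M.weakStates,
        if (M.weakSeq w ℓ).2 = ∅ then
          (M.reachSet w (ℓ + 1) ∩ M.weakStates) ∩ M.weakAccStates
        else M.stepSet (M.weakSeq w ℓ).2 (w ℓ) ∩ M.weakAccStates)

end NBA

namespace NBA

variable {Q A : Type}

/-- An SCC `C` is deterministic if every state has at most one `a`-successor inside `C`. -/
def IsDeterministicSCC (M : NBA Q A) (C : Set Q) : Prop :=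
  ∀ q ∈ C, ∀ a : A, (M.trans q a ∩ C).Subsingleton

/-- A DAC: an accepting SCC that is deterministic and not inherently weak. -/
def IsDAC (M : NBA Q A) (C : Set Q) : Prop :=
  M.IsSCC C ∧ M.AccSCC C ∧ M.IsDeterministicSCC C ∧ ¬ M.InherentlyWeak C

/-- `δ_D(S ∩ D, a)`: the states of `D` reached from `S ∩ D` by an `a`-transition inside `D`. -/
def dacImage (M : NBA Q A) (D S : Set Q) (a : A) : Set Q :=
  {q' ∈ D | ∃ q ∈ S ∩ D, q' ∈ M.trans q a}

/-- The intermediate level-labelling `g'` of the DAC construction: states reached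
inside `D` inherit the minimum label of their predecessors, newly entering states
(in the order `≼` on `Q`) get labels `|D| + 1, |D| + 2, …`, and all other states
get `∞`. Here `S` and `S'` are the sets of states reached at the current and next
levels of the run DAG. -/
noncomputable def dacPrime [LinearOrder Q] (M : NBA Q A) (D : Set Q)
    (S S' : Set Q) (a : A) (g : Q → ℕ∞) : Q → ℕ∞ := fun q' =>
  if q' ∈ M.dacImage D S a then
    sInf {v : ℕ∞ | ∃ q ∈ S ∩ D, q' ∈ M.trans q a ∧ g q = v}
  else if q' ∈ (S' ∩ D) \ M.dacImage D S a then
    ((D.ncard + Set.ncard {p | p ∈ (S' ∩ D) \ M.dacImage D S a ∧ p < q'} + 1 : ℕ) : ℕ∞)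
  else ⊤

/-- Rank compression `ord`: each finite label is replaced by its relative position
among the finite labels occurring in the image of `g` on `D`. -/
noncomputable def dacOrd (D : Set Q) (g : Q → ℕ∞) : Q → ℕ∞ := fun q =>
  if g q ≠ ⊤ then
    ((Set.ncard {v : ℕ∞ | v ≤ g q ∧ v ≠ ⊤ ∧ ∃ p ∈ D, g p = v} : ℕ) : ℕ∞)
  else ⊤

/-- The sequence `g_ℓ` of level-labelling functions of the DAC construction for
the DAC `D` of `M` over the word `w`. -/
noncomputable def dacG [LinearOrder Q] (M : NBA Q A) (D : Set Q) (w : ℕ → A) :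
    ℕ → Q → ℕ∞
  | 0 => fun q => if q = M.init ∧ q ∈ D then 1 else ⊤
  | ℓ + 1 =>
      dacOrd D
        (M.dacPrime D (M.reachSet w ℓ) (M.reachSet w (ℓ + 1)) (w ℓ) (M.dacG D w ℓ))

/-- The color `c_ℓ` emitted by the step from level `ℓ` to level `ℓ + 1` of the DAC
construction: with `B(e)` the vanished labels (plus `|D| + 1`) and `G(e)` the labels
witnessing an accepting transition (plus `|D| + 1`), the color is
`min (2 ⬝ min B(e) − 1) (2 ⬝ min G(e))`. -/
noncomputable def dacColor [LinearOrder Q] (M : NBA Q A) (D : Set Q) (w : ℕ → A)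
    (ℓ : ℕ) : ℕ :=
  let g := M.dacG D w ℓ
  let g' := M.dacPrime D (M.reachSet w ℓ) (M.reachSet w (ℓ + 1)) (w ℓ) g
  let B : Set ℕ :=
    insert (D.ncard + 1) {n : ℕ | (∃ q ∈ D, g q = (n : ℕ∞)) ∧ ¬ ∃ q ∈ D, g' q = (n : ℕ∞)}
  let G : Set ℕ :=
    insert (D.ncard + 1)
      {n : ℕ | ∃ q q' : Q, (q, w ℓ, q') ∈ M.acc ∧ g q = (n : ℕ∞) ∧ g' q' = (n : ℕ∞)}
  min (2 * sInf B - 1) (2 * sInf G)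

end NBA

section Aux

variable {Q A : Type} [Fintype Q] [LinearOrder Q]

/-- Labels `g_ℓ` are nonzero on `D`. -/
lemma dacG_ne_zero (M : NBA Q A) (D : Set Q) (w : ℕ → A) (ℓ : ℕ) (q : Q)
    (hq : q ∈ D) : M.dacG D w ℓ q ≠ 0 := by
  cases ℓ with
  | zero =>
      unfold NBA.dacG
      split <;> simp
  | succ ℓ =>
      unfold NBA.dacG NBA.dacOrd
      set g' := M.dacPrime D (M.reachSet w ℓ) (M.reachSet w (ℓ + 1)) (w ℓ) (M.dacG D w ℓ)
      by_cases h : g' q = ⊤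
      · simp [h]
      · rw [if_pos h]
        set S : Set ℕ∞ := {v : ℕ∞ | v ≤ g' q ∧ v ≠ ⊤ ∧ ∃ p ∈ D, g' p = v} with hS
        have hfin : S.Finite := by
          have : S ⊆ g' '' D := fun v hv => by
            obtain ⟨p, hp, hpv⟩ := hv.2.2
            exact ⟨p, hp, hpv⟩
          exact (D.toFinite.image g').subset this
        have hne : S.Nonempty := ⟨g' q, le_rfl, h, q, hq, rfl⟩
        have : 0 < S.ncard := Set.ncard_pos hfin |>.mpr hne
        simp only [ne_eq, Nat.cast_eq_zero]
        omega

/-- Intermediate labels `g'` are nonzero on `D`. -/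
lemma dacPrime_ne_zero (M : NBA Q A) (D : Set Q) (w : ℕ → A) (ℓ : ℕ) (S' : Set Q)
    (q : Q) (hq : q ∈ D) :
    M.dacPrime D (M.reachSet w ℓ) S' (w ℓ) (M.dacG D w ℓ) q ≠ 0 := by
  unfold NBA.dacPrime
  split
  · have h1 : (1 : ℕ∞) ≤ sInf {v : ℕ∞ | ∃ p ∈ M.reachSet w ℓ ∩ D,
        q ∈ M.trans p (w ℓ) ∧ M.dacG D w ℓ p = v} := by
      refine le_sInf fun v hv => ?_
      obtain ⟨p, hp, _, hpv⟩ := hv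
      have := dacG_ne_zero M D w ℓ p hp.2
      rw [hpv] at this
      exact ENat.one_le_iff_ne_zero.mpr this
    intro h0
    rw [h0] at h1
    simp at h1
  · split
    · simp
    · simp

/-- The rank-compressed label is at most the original label, provided all
labels on `D` are nonzero. -/
lemma dacOrd_le (D : Set Q) (g : Q → ℕ∞) (hg : ∀ p ∈ D, g p ≠ 0) (q : Q)
    (hq : g q ≠ ⊤) : NBA.dacOrd D g q ≤ g q := by
  unfold NBA.dacOrd
  rw [if_pos hq]
  obtain ⟨n, hn⟩ : ∃ n : ℕ, g q = (n : ℕ∞) := by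
    cases hgq : g q with
    | top => exact absurd hgq hq
    | coe n => exact ⟨n, rfl⟩
  rw [hn]
  set S : Set ℕ∞ := {v : ℕ∞ | v ≤ (n : ℕ∞) ∧ v ≠ ⊤ ∧ ∃ p ∈ D, g p = v}
  have hsub : S ⊆ (fun k : ℕ => (k : ℕ∞)) '' ↑(Finset.Icc 1 n) := by
    intro v hv
    obtain ⟨hvle, hvt, p, hp, hpv⟩ := hv
    obtain ⟨k, rfl⟩ : ∃ k : ℕ, v = (k : ℕ∞) := by
      cases hvq : v with
      | top => exact absurd hvq hvt
      | coe k => exact ⟨k, rfl⟩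
    refine ⟨k, ?_, rfl⟩
    simp only [Finset.coe_Icc, Set.mem_Icc]
    constructor
    · have := hg p hp
      rw [hpv] at this
      exact_mod_cast ENat.one_le_iff_ne_zero.mpr this
    · exact_mod_cast hvle
  have hcard : S.ncard ≤ n := by
    have := Set.ncard_le_ncard hsub ((Finset.Icc 1 n).finite_toSet.image _)
    rwa [Set.ncard_image_of_injective _ (fun a b => by exact_mod_cast id),
      Set.ncard_coe_finset, Nat.card_Icc, Nat.add_sub_cancel] at this
  exact_mod_cast hcard

end Aux

/-- In the DAC construction, labels never increase along
transitions inside `D`; consequently, along any run that stays in `D` from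
level `ℓ₀` on, the labels form a non-increasing, hence eventually constant,
sequence. -/
theorem dac_labels_nonincreasing {Q A : Type}
    [Fintype Q] [LinearOrder Q] [Finite A]
    (M : NBA Q A) (D : Set Q) (hD : M.IsDAC D) (w : ℕ → A) :
    (∀ (ℓ : ℕ) (q q' : Q), q ∈ M.reachSet w ℓ → q ∈ D → q' ∈ D →
        q' ∈ M.trans q (w ℓ) → M.dacG D w (ℓ + 1) q' ≤ M.dacG D w ℓ q) ∧
    (∀ (ρ : ℕ → Q) (ℓ₀ : ℕ), M.IsRun w ρ → (∀ j ≥ ℓ₀, ρ j ∈ D) →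
      (∀ j ≥ ℓ₀, M.dacG D w (j + 1) (ρ (j + 1)) ≤ M.dacG D w j (ρ j)) ∧
      ∃ N ≥ ℓ₀, ∀ j ≥ N, M.dacG D w j (ρ j) = M.dacG D w N (ρ N)) := by
  have part1 : ∀ (ℓ : ℕ) (q q' : Q), q ∈ M.reachSet w ℓ → q ∈ D → q' ∈ D →
      q' ∈ M.trans q (w ℓ) → M.dacG D w (ℓ + 1) q' ≤ M.dacG D w ℓ q := by
    intro ℓ q q' hq hqD hq'D htr
    by_cases hg : M.dacG D w ℓ q = ⊤
    · rw [hg]; exact le_top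
    · set g' := M.dacPrime D (M.reachSet w ℓ) (M.reachSet w (ℓ + 1)) (w ℓ)
        (M.dacG D w ℓ) with hg'
      have himg : q' ∈ M.dacImage D (M.reachSet w ℓ) (w ℓ) :=
        ⟨hq'D, q, ⟨hq, hqD⟩, htr⟩
      have h1 : g' q' = sInf {v : ℕ∞ | ∃ p ∈ M.reachSet w ℓ ∩ D,
          q' ∈ M.trans p (w ℓ) ∧ M.dacG D w ℓ p = v} := by
        rw [hg']; unfold NBA.dacPrime; rw [if_pos himg]
      have h2 : g' q' ≤ M.dacG D w ℓ q := by
        rw [h1]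
        exact sInf_le ⟨q, ⟨hq, hqD⟩, htr, rfl⟩
      have h3 : g' q' ≠ ⊤ := fun h => hg (top_le_iff.mp (h ▸ h2))
      have h4 : M.dacG D w (ℓ + 1) q' ≤ g' q' := by
        show NBA.dacOrd D g' q' ≤ g' q'
        exact dacOrd_le D g' (fun p hp => dacPrime_ne_zero M D w ℓ _ p hp) q' h3
      exact h4.trans h2
  refine ⟨part1, fun ρ ℓ₀ hrun hDmem => ?_⟩
  have hreach : ∀ j, ρ j ∈ M.reachSet w j := by
    intro j
    induction j with
    | zero => rw [hrun.1]; exact rfl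
    | succ j ih => exact ⟨ρ j, ih, hrun.2 j⟩
  have mono : ∀ j ≥ ℓ₀, M.dacG D w (j + 1) (ρ (j + 1)) ≤ M.dacG D w j (ρ j) :=
    fun j hj => part1 j (ρ j) (ρ (j + 1)) (hreach j) (hDmem j hj)
      (hDmem (j + 1) (by omega)) (hrun.2 j)
  refine ⟨mono, ?_⟩
  have chain : ∀ i j, ℓ₀ ≤ i → i ≤ j → M.dacG D w j (ρ j) ≤ M.dacG D w i (ρ i) := by
    intro i j hi hij
    induction j, hij using Nat.le_induction with
    | base => exact le_rfl
    | succ j hij ih => exact (mono j (hi.trans hij)).trans ih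
  have wf : WellFounded ((· < ·) : ℕ∞ → ℕ∞ → Prop) := wellFounded_lt
  obtain ⟨m, ⟨N, hN, hmN⟩, hmin⟩ := wf.has_min
    {v : ℕ∞ | ∃ j ≥ ℓ₀, M.dacG D w j (ρ j) = v} ⟨_, ℓ₀, le_rfl, rfl⟩
  refine ⟨N, hN, fun j hj => le_antisymm ?_ ?_⟩
  · exact chain N j hN hj
  · have := hmin (M.dacG D w j (ρ j)) ⟨j, hN.trans hj, rfl⟩
    rw [hmN]
    exact not_lt.mp this
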